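/- arXiv:1902.06579 — 5 statements merged into one kernel-verified Lean document; each statement's English description precedes it below -/
import Mathlib

section
/- Let A : Z → [0,1] be a conditional distribution function for a probability measure P on Z = X × ℝ, i.e., for each y, A(X,y) = P(Y ≤ y | X) almost surely when (X,Y) ~ P. If for P-almost all x the function y ↦ A(x,y) is continuous, then the probability integral transform A(X,Y) is uniformly distributed on [0,1]. -/
open MeasureTheory Set Filter Topology ProbabilityTheory

/-- Probability integral transform for a continuous Stieltjes CDF. -/
lemma stieltjes_pit {F : StieltjesFunction ℝ} (hF0 : Tendsto F atBot (nhds 0))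
    (hF1 : Tendsto F atTop (nhds 1)) (hcont : Continuous F)
    {α : ℝ} (hα : α ∈ Icc (0:ℝ) 1) :
    F.measure {y | F y ≤ α} = ENNReal.ofReal α := by
  obtain ⟨hα0, hα1⟩ := hα
  set S := {y : ℝ | F y ≤ α} with hSdef
  by_cases hne : S.Nonempty
  · by_cases hbdd : BddAbove S
    · set t := sSup S with ht
      have hSclosed : IsClosed S := isClosed_le hcont continuous_const
      have htS : t ∈ S := hSclosed.csSup_mem hne hbdd
      have hSIic : S = Iic t := by
        ext y
        constructor
        · exact fun hy => le_csSup hbdd hy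
        · exact fun hy => le_trans (F.mono hy) htS
      have hFt : F t = α := by
        refine le_antisymm htS ?_
        have h1 : Tendsto F (𝓝[>] t) (𝓝 (F t)) :=
          (hcont.continuousAt).continuousWithinAt.tendsto
        refine ge_of_tendsto h1 ?_
        filter_upwards [self_mem_nhdsWithin] with y hy
        by_contra h
        push_neg at h
        exact absurd (le_csSup hbdd h.le) (not_le.2 hy)
      rw [hSIic, F.measure_Iic hF0, hFt, sub_zero]
    · have hall : ∀ y, F y ≤ α := by
        intro y
        obtain ⟨y', hy'S, hyy'⟩ := not_bddAbove_iff.mp hbdd y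
        exact (F.mono hyy'.le).trans hy'S
      have hSuniv : S = univ := eq_univ_of_forall hall
      have h1α : (1:ℝ) ≤ α := le_of_tendsto hF1 (Eventually.of_forall hall)
      have hα1' : α = 1 := le_antisymm hα1 h1α
      rw [hSuniv, StieltjesFunction.measure_univ _ hF0 hF1, hα1']
      norm_num
  · have hα0' : α = 0 := by
      by_contra h
      have hpos : 0 < α := lt_of_le_of_ne hα0 (Ne.symm h)
      obtain ⟨y, hy⟩ := (hF0.eventually (gt_mem_nhds hpos)).exists
      exact hne ⟨y, hy.le⟩
    rw [not_nonempty_iff_eq_empty.mp hne, measure_empty, hα0', ENNReal.ofReal_zero]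

/-- If `A : 𝓧 × ℝ → [0,1]` is a conditional distribution function for a
probability measure `P` on `𝓧 × ℝ` (i.e., for each `y`, `A (x, y)` is a version of
`P(Y ≤ y | X = x)`), and `y ↦ A (x, y)` is continuous for `P`-almost all observations,
then the probability integral transform `A (X, Y)` is uniformly distributed on `[0,1]`. -/
theorem probability_integral_transform_uniform
    {𝓧 : Type*} [MeasurableSpace 𝓧]
    (P : Measure (𝓧 × ℝ)) [IsProbabilityMeasure P]
    (A : 𝓧 × ℝ → ℝ)
    (hA_meas : Measurable A)
    (hA_range : ∀ z, A z ∈ Icc (0 : ℝ) 1)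
    (hA_cond : ∀ y : ℝ,
      (fun z : 𝓧 × ℝ => A (z.1, y)) =ᵐ[P] fun z => ProbabilityTheory.condCDF P z.1 y)
    (hA_cont : ∀ᵐ z ∂P, Continuous fun y => A (z.1, y)) :
    ∀ α ∈ Icc (0 : ℝ) 1, P {z | A z ≤ α} = ENNReal.ofReal α := by
  intro α hα
  have hf := isCondKernelCDF_condCDF P
  set κ := hf.toKernel _ with hκ
  -- disintegration formula via the condCDF kernel
  have hdis : ∀ S : Set (𝓧 × ℝ), MeasurableSet S →
      P S = ∫⁻ x, (condCDF P x).measure {y | (x, y) ∈ S} ∂P.fst := by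
    intro S hS
    have h := compProd_toKernel hf
    have h2 : P S = (Kernel.const Unit P.fst ⊗ₖ κ) () S := by
      rw [hκ, h, Kernel.const_apply]
    rw [h2, Kernel.compProd_apply hS, Kernel.const_apply]
    rfl
  -- a.e. (in z) properties
  have hQ : ∀ᵐ z ∂P, (∀ y, A (z.1, y) = condCDF P z.1 y) ∧ Continuous ⇑(condCDF P z.1) := by
    have hrat : ∀ᵐ z ∂P, ∀ q : ℚ, A (z.1, (q:ℝ)) = condCDF P z.1 q :=
      ae_all_iff.mpr fun q => hA_cond q
    filter_upwards [hrat, hA_cont] with z hzq hzc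
    have hall : ∀ y, A (z.1, y) = condCDF P z.1 y := by
      intro y
      obtain ⟨u, hu_anti, hu_mem, hu_tend⟩ := exists_seq_strictAnti_tendsto y
      choose q hq1 hq2 using fun n => exists_rat_btwn (hu_mem n)
      have hqt : Tendsto (fun n => (q n : ℝ)) atTop (𝓝 y) :=
        tendsto_of_tendsto_of_tendsto_of_le_of_le tendsto_const_nhds hu_tend
          (fun n => (hq1 n).le) (fun n => (hq2 n).le)
      have h1 : Tendsto (fun n => condCDF P z.1 (q n : ℝ)) atTop (𝓝 (condCDF P z.1 y)) :=
        ((condCDF P z.1).right_continuous y).tendsto.comp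
          (tendsto_nhdsWithin_iff.mpr ⟨hqt, Eventually.of_forall fun n => (hq1 n).le⟩)
      have h2 : Tendsto (fun n => A (z.1, (q n : ℝ))) atTop (𝓝 (A (z.1, y))) :=
        (hzc.tendsto y).comp hqt
      have h1' : Tendsto (fun n => A (z.1, (q n : ℝ))) atTop (𝓝 (condCDF P z.1 y)) :=
        h1.congr fun n => (hzq (q n)).symm
      exact tendsto_nhds_unique h2 h1'
    have hfun : (fun y => A (z.1, y)) = ⇑(condCDF P z.1) := funext hall
    exact ⟨hall, hfun ▸ hzc⟩
  -- transfer to a.e. statement in x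
  obtain ⟨N, hNsub, hNmeas, hNnull⟩ := exists_measurable_superset_of_null hQ
  have hNint : ∫⁻ x, (condCDF P x).measure {y | (x, y) ∈ N} ∂P.fst = 0 := by
    rw [← hdis N hNmeas, hNnull]
  have hmeas_int : Measurable fun x => (condCDF P x).measure {y | (x, y) ∈ N} := by
    have hN' : MeasurableSet {p : (Unit × 𝓧) × ℝ | (p.1.2, p.2) ∈ N} :=
      (measurable_fst.snd.prodMk measurable_snd) hNmeas
    have hcomp : Measurable fun x : 𝓧 => ((), x) := measurable_const.prodMk measurable_id
    exact (ProbabilityTheory.Kernel.measurable_kernel_prodMk_left (κ := κ) hN').comp hcomp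
  have hae : ∀ᵐ x ∂P.fst, (condCDF P x).measure {y | (x, y) ∈ N} = 0 :=
    (lintegral_eq_zero_iff hmeas_int).mp hNint
  have haeQ : ∀ᵐ x ∂P.fst, (∀ y, A (x, y) = condCDF P x y) ∧ Continuous ⇑(condCDF P x) := by
    filter_upwards [hae] with x hx
    by_contra hQx
    have huniv : {y : ℝ | (x, y) ∈ N} = univ :=
      eq_univ_of_forall fun y => hNsub (by simpa using hQx)
    rw [huniv, measure_univ] at hx
    exact one_ne_zero hx
  -- final computation
  have hSmeas : MeasurableSet {z : 𝓧 × ℝ | A z ≤ α} := measurableSet_le hA_meas measurable_const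
  rw [hdis _ hSmeas]
  have hconst : ∀ᵐ x ∂P.fst,
      (condCDF P x).measure {y | (x, y) ∈ {z : 𝓧 × ℝ | A z ≤ α}} = ENNReal.ofReal α := by
    filter_upwards [haeQ] with x hx
    obtain ⟨hxeq, hxcont⟩ := hx
    have hset : {y : ℝ | A (x, y) ≤ α} = {y | condCDF P x y ≤ α} := by
      ext y; simp only [mem_setOf_eq, hxeq y]
    show (condCDF P x).measure {y : ℝ | A (x, y) ≤ α} = ENNReal.ofReal α
    rw [hset]
    exact stieltjes_pit (tendsto_condCDF_atBot P x) (tendsto_condCDF_atTop P x) hxcont hα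
  rw [lintegral_congr_ae hconst, lintegral_const, measure_univ, mul_one]
end

section
/- Let U_1,…,U_n, U, τ be independent with U_1,…,U_n,U IID uniform on [0,1] and τ uniform on [0,1]. Define Q = (1/(n+1))|{i : U_i < U}| + (τ/(n+1))|{i : U_i = U}| + τ/(n+1). Then Q is uniformly distributed on [0,1]: P(Q ≤ α) = α for all α ∈ [0,1]. -/
open MeasureTheory ProbabilityTheory Set Finset

lemma clamp_sum (n : ℕ) (β : ℝ) (h0 : 0 ≤ β) (h1 : β ≤ n + 1) :
    ∑ k ∈ Finset.range (n + 1), max 0 (min (β - k) 1) = β := by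
  induction n with
  | zero =>
    rw [show (0:ℕ)+1 = 1 from rfl, Finset.range_one, Finset.sum_singleton]
    norm_num
    rw [min_eq_left (by simpa using h1), max_eq_right h0]
  | succ m ih =>
    rw [Finset.sum_range_succ]
    rcases le_or_gt β (m + 1) with h | h
    · rw [ih h]
      · have : β - ((m:ℝ) + 1) ≤ 0 := by push_cast; linarith
        rw [min_eq_left (by linarith), max_eq_left (by push_cast; linarith)]
        ring
    · have hterm : ∀ k ∈ Finset.range (m + 1), max 0 (min (β - k) 1) = 1 := by
        intro k hk
        have hk' : (k : ℝ) ≤ m := by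
          have := Finset.mem_range.mp hk; exact_mod_cast Nat.lt_succ_iff.mp this
        rw [min_eq_right (by linarith), max_eq_right (by norm_num)]
      rw [Finset.sum_congr rfl hterm, Finset.sum_const, Finset.card_range]
      have h1' : β - ((m:ℝ) + 1) ≤ 1 := by push_cast at h1 ⊢; linarith
      push_cast
      rw [min_eq_left h1', max_eq_right (by push_cast at h; linarith)]
      ring


/-- if `U_1,…,U_n, U, τ` are independent with `U_1,…,U_n, U` IID uniform
on `[0,1]` and `τ` uniform on `[0,1]`, then the smoothed rank
`Q = (|{i : U_i < U}| + τ |{i : U_i = U}| + τ)/(n+1)` is uniform on `[0,1]`. -/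
theorem smoothed_rank_uniform
    {Ω : Type*} [MeasurableSpace Ω] (μ : Measure Ω) [IsProbabilityMeasure μ]
    (n : ℕ)
    -- `V (Sum.inl i) = U_i`, `V (Sum.inr 0) = U` (test), `V (Sum.inr 1) = τ`
    (V : Fin n ⊕ Fin 2 → Ω → ℝ)
    (hV_meas : ∀ i, Measurable (V i))
    (hV_indep : iIndepFun V μ)
    (hV_unif : ∀ i, Measure.map (V i) μ = volume.restrict (Icc (0 : ℝ) 1))
    (Q : Ω → ℝ)
    (hQ : ∀ ω, Q ω =
      ((univ.filter fun i : Fin n => V (Sum.inl i) ω < V (Sum.inr 0) ω).card : ℝ)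
          / (n + 1)
        + V (Sum.inr 1) ω *
          ((univ.filter fun i : Fin n => V (Sum.inl i) ω = V (Sum.inr 0) ω).card : ℝ)
          / (n + 1)
        + V (Sum.inr 1) ω / (n + 1)) :
    ∀ α ∈ Icc (0 : ℝ) 1, μ {ω | Q ω ≤ α} = ENNReal.ofReal α := by
  -- notation
  let ι := (Fin n ⊕ Fin 2)
  set ν : Measure ℝ := volume.restrict (Icc (0 : ℝ) 1) with hν
  have hν_prob : IsProbabilityMeasure ν := by
    constructor
    rw [hν, Measure.restrict_apply_univ, Real.volume_Icc]
    norm_num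
  set π : Measure (ι → ℝ) := Measure.pi (fun _ => ν) with hπ
  have hπ_prob : IsProbabilityMeasure π := by rw [hπ]; infer_instance
  set W : Ω → (ι → ℝ) := fun ω i => V i ω with hWdef
  have hW : Measurable W := measurable_pi_lambda _ (fun i => hV_meas i)
  -- Step 1: law of W is the product measure
  have h_map : μ.map W = π := by
    refine (Measure.pi_eq fun s hs => ?_).symm
    rw [Measure.map_apply hW (MeasurableSet.univ_pi hs)]
    have hpre : W ⁻¹' (Set.pi univ s) = ⋂ i ∈ (Finset.univ : Finset ι), V i ⁻¹' s i := by
      ext ω; simp [Set.mem_pi, hWdef]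
    rw [hpre, hV_indep.measure_inter_preimage_eq_mul Finset.univ (fun i _ => hs i)]
    exact Finset.prod_congr rfl fun i _ => by
      rw [← hV_unif i, Measure.map_apply (hV_meas i) (hs i)]
  -- Step 2: permutation invariance of π
  have h_perm : ∀ e : ι ≃ ι, π.map (fun w => w ∘ e) = π := by
    intro e
    have hme : Measurable (fun w : ι → ℝ => w ∘ e) :=
      measurable_pi_lambda _ (fun i => measurable_pi_apply (e i))
    refine (Measure.pi_eq fun s hs => ?_).symm
    rw [Measure.map_apply hme (MeasurableSet.univ_pi hs)]
    have hpre : (fun w : ι → ℝ => w ∘ e) ⁻¹' (Set.pi univ s)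
        = Set.pi univ (fun j => s (e.symm j)) := by
      ext w
      simp only [Set.mem_preimage, Set.mem_pi, Set.mem_univ, forall_true_left, true_implies,
        Function.comp]
      constructor
      · intro h j; simpa using h (e.symm j)
      · intro h i; simpa using h (e i)
    rw [hpre, Measure.pi_pi]
    exact Equiv.prod_comp e.symm (fun i => ν (s i))
  -- ties are null
  have h_tie : ∀ a b : ι, a ≠ b → μ {ω | V a ω = V b ω} = 0 := by
    intro a b hab
    have hind := (hV_indep.indepFun hab)
    rw [indepFun_iff_map_prod_eq_prod_map_map (hV_meas a).aemeasurable
      (hV_meas b).aemeasurable] at hind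
    have hdiag : MeasurableSet {p : ℝ × ℝ | p.1 = p.2} :=
      measurableSet_eq_fun measurable_fst measurable_snd
    have : {ω | V a ω = V b ω} = (fun ω => (V a ω, V b ω)) ⁻¹' {p : ℝ × ℝ | p.1 = p.2} := rfl
    rw [this, ← Measure.map_apply ((hV_meas a).prodMk (hV_meas b)) hdiag, hind,
      hV_unif a, hV_unif b, Measure.prod_apply hdiag]
    have : ∀ x : ℝ, ν (Prod.mk x ⁻¹' {p : ℝ × ℝ | p.1 = p.2}) = 0 := by
      intro x
      have : (Prod.mk x ⁻¹' {p : ℝ × ℝ | p.1 = p.2}) = {x} := by ext y; simp [eq_comm]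
      rw [this]
      exact le_antisymm (le_trans (Measure.restrict_le_self _)
        (by rw [Real.volume_singleton])) zero_le
    simp [this]
  classical
  -- data index set
  set J : Finset (Fin n ⊕ Fin 2) := Finset.univ.erase (Sum.inr 1) with hJ
  have hJcard : J.card = n + 1 := by
    rw [hJ, Finset.card_erase_of_mem (Finset.mem_univ _)]
    simp [Fintype.card_sum]
  have hmemJ : ∀ a : Fin n ⊕ Fin 2, a ∈ J ↔ a ≠ Sum.inr 1 := by
    intro a; rw [hJ, Finset.mem_erase]; simp
  have h01 : (0 : Fin 2) ≠ 1 := by decide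
  have hr0J : (Sum.inr 0 : Fin n ⊕ Fin 2) ∈ J := (hmemJ _).mpr (by simp [h01])
  have hinlJ : ∀ i : Fin n, (Sum.inl i : Fin n ⊕ Fin 2) ∈ J := fun i => (hmemJ _).mpr (by simp)
  -- rank function on the product space
  set rnk : (Fin n ⊕ Fin 2) → ((Fin n ⊕ Fin 2) → ℝ) → ℕ :=
    fun j w => (J.filter fun a => w a < w j).card with hrnk
  have hrnk_meas : ∀ j, Measurable (rnk j) := by
    intro j
    have hh : rnk j = fun w => ∑ a ∈ J, if w a < w j then 1 else 0 := by
      funext w; rw [hrnk]; exact Finset.card_filter _ _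
    rw [hh]
    exact Finset.measurable_sum _ fun a _ => Measurable.ite
      (measurableSet_lt (measurable_pi_apply a) (measurable_pi_apply j))
      measurable_const measurable_const
  -- distinctness set
  set Dw : Set ((Fin n ⊕ Fin 2) → ℝ) :=
    ⋂ (a ∈ J) (b ∈ J) (_ : a ≠ b), {w : (Fin n ⊕ Fin 2) → ℝ | w a ≠ w b} with hDw
  have hDw_meas : MeasurableSet Dw := by
    refine MeasurableSet.iInter fun a => MeasurableSet.iInter fun _ =>
      MeasurableSet.iInter fun b => MeasurableSet.iInter fun _ =>
      MeasurableSet.iInter fun _ => ?_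
    exact (measurableSet_eq_fun (measurable_pi_apply a) (measurable_pi_apply b)).compl
  have hDw_mem : ∀ w, w ∈ Dw ↔ ∀ a ∈ J, ∀ b ∈ J, a ≠ b → w a ≠ w b := by
    intro w; simp [hDw]
  have hπtie : ∀ a b : Fin n ⊕ Fin 2, a ≠ b → π {w : (Fin n ⊕ Fin 2) → ℝ | w a = w b} = 0 := by
    intro a b hab
    rw [← h_map, Measure.map_apply hW
      (measurableSet_eq_fun (measurable_pi_apply a) (measurable_pi_apply b))]
    exact h_tie a b hab
  have hDwc_null : π Dwᶜ = 0 := by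
    have hsub : Dwᶜ ⊆ ⋃ (a : Fin n ⊕ Fin 2) (b : Fin n ⊕ Fin 2) (_ : a ≠ b),
        {w : (Fin n ⊕ Fin 2) → ℝ | w a = w b} := by
      intro w hw
      simp only [hDw, Set.mem_compl_iff, Set.mem_iInter, Set.mem_setOf_eq, not_forall] at hw
      obtain ⟨a, haJ, b, hbJ, hab, hw⟩ := hw
      simp only [Set.mem_iUnion, Set.mem_setOf_eq]
      exact ⟨a, b, hab, not_not.mp hw⟩
    exact measure_mono_null hsub (measure_iUnion_null fun a => measure_iUnion_null fun b =>
      measure_iUnion_null fun hab => hπtie a b hab)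
  have hDw_one : π Dw = 1 := by
    have h2 := measure_add_measure_compl (μ := π) hDw_meas
    rw [hDwc_null, add_zero] at h2; rw [h2]; exact measure_univ
  -- rank combinatorics
  have hrnk_lt : ∀ w ∈ Dw, ∀ j ∈ J, ∀ j' ∈ J, w j < w j' → rnk j w < rnk j' w := by
    intro w _ j hj j' _ hlt
    have hsub : (J.filter fun a => w a < w j) ⊆ (J.filter fun a => w a < w j') := by
      intro a ha; rw [Finset.mem_filter] at ha ⊢; exact ⟨ha.1, lt_trans ha.2 hlt⟩
    refine Finset.card_lt_card ((Finset.ssubset_iff_of_subset hsub).mpr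
      ⟨j, Finset.mem_filter.mpr ⟨hj, hlt⟩, fun hmem => ?_⟩)
    exact absurd (Finset.mem_filter.mp hmem).2 (lt_irrefl _)
  have hrnk_inj : ∀ w ∈ Dw, ∀ j ∈ J, ∀ j' ∈ J, rnk j w = rnk j' w → j = j' := by
    intro w hw j hj j' hj' heq
    by_contra hne
    have hne' := (hDw_mem w).mp hw j hj j' hj' hne
    rcases lt_or_gt_of_ne hne' with h | h
    · exact absurd heq (Nat.ne_of_lt (hrnk_lt w hw j hj j' hj' h))
    · exact absurd heq.symm (Nat.ne_of_lt (hrnk_lt w hw j' hj' j hj h))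
  have hrnk_le : ∀ (w) (j), j ∈ J → rnk j w ≤ n := by
    intro w j hj
    rw [hrnk]
    have hsub : (J.filter fun a => w a < w j) ⊆ J.erase j := by
      intro a ha; rw [Finset.mem_filter] at ha; rw [Finset.mem_erase]
      refine ⟨fun h => ?_, ha.1⟩
      exact absurd (h ▸ ha.2) (lt_irrefl _)
    calc (J.filter fun a => w a < w j).card ≤ (J.erase j).card := Finset.card_le_card hsub
    _ = n := by rw [Finset.card_erase_of_mem hj, hJcard]; omega
  have hcover : ∀ k ≤ n, ∀ w ∈ Dw, ∃ j ∈ J, rnk j w = k := by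
    intro k hk w hw
    have hsurj := Finset.surj_on_of_inj_on_of_card_le (s := J) (t := Finset.range (n+1))
      (fun j _ => rnk j w)
      (fun j hj => Finset.mem_range.mpr (Nat.lt_succ_of_le (hrnk_le w j hj)))
      (fun j j' hj hj' h => hrnk_inj w hw j hj j' hj' h)
      (by rw [Finset.card_range, hJcard])
    obtain ⟨j, hj, hjk⟩ := hsurj k (Finset.mem_range.mpr (Nat.lt_succ_of_le hk))
    exact ⟨j, hj, hjk.symm⟩
  have hA_meas : ∀ j k, MeasurableSet ({w : (Fin n ⊕ Fin 2) → ℝ | rnk j w = k} ∩ Dw) :=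
    fun j k => ((hrnk_meas j) (measurableSet_singleton k)).inter hDw_meas
  -- swap invariance
  have hswap : ∀ j ∈ J, ∀ k : ℕ,
      π ({w | rnk j w = k} ∩ Dw) = π ({w | rnk (Sum.inr 0) w = k} ∩ Dw) := by
    intro j hj k
    set e : (Fin n ⊕ Fin 2) ≃ (Fin n ⊕ Fin 2) := Equiv.swap j (Sum.inr 0) with he
    have hme : Measurable (fun w : (Fin n ⊕ Fin 2) → ℝ => w ∘ e) :=
      measurable_pi_lambda _ (fun i => measurable_pi_apply (e i))
    have heJ : ∀ a ∈ J, e a ∈ J := by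
      intro a ha
      rcases eq_or_ne a j with rfl | h1
      · rw [he, Equiv.swap_apply_left]; exact hr0J
      rcases eq_or_ne a (Sum.inr 0) with rfl | h2
      · rw [he, Equiv.swap_apply_right]; exact hj
      · rw [he, Equiv.swap_apply_of_ne_of_ne h1 h2]; exact ha
    have hee : ∀ a, e (e a) = a := fun a => Equiv.swap_apply_self _ _ a
    have hej : e j = Sum.inr 0 := by rw [he, Equiv.swap_apply_left]
    have hpre : (fun w : (Fin n ⊕ Fin 2) → ℝ => w ∘ e) ⁻¹' ({w | rnk j w = k} ∩ Dw)
        = ({w | rnk (Sum.inr 0) w = k} ∩ Dw) := by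
      ext w
      simp only [Set.mem_preimage, Set.mem_inter_iff, Set.mem_setOf_eq]
      have hD : (w ∘ e) ∈ Dw ↔ w ∈ Dw := by
        rw [hDw_mem, hDw_mem]
        constructor
        · intro h a ha b hb hab
          have := h (e a) (heJ a ha) (e b) (heJ b hb) (fun hh => hab (e.injective hh))
          simpa [Function.comp, hee] using this
        · intro h a ha b hb hab
          exact h (e a) (heJ a ha) (e b) (heJ b hb) (fun hh => hab (e.injective hh))
      have hrk : rnk j (w ∘ e) = rnk (Sum.inr 0) w := by
        rw [hrnk]
        simp only [Function.comp, hej]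
        refine Finset.card_bij (fun a _ => e a) ?_ ?_ ?_
        · intro a ha
          rw [Finset.mem_filter] at ha ⊢
          exact ⟨heJ a ha.1, ha.2⟩
        · intro a _ a' _ hh; exact e.injective hh
        · intro b hb
          rw [Finset.mem_filter] at hb
          refine ⟨e b, Finset.mem_filter.mpr ⟨heJ b hb.1, ?_⟩, hee b⟩
          rw [hee]; exact hb.2
      rw [hD, hrk]
    calc π ({w | rnk j w = k} ∩ Dw)
        = (π.map (fun w => w ∘ e)) ({w | rnk j w = k} ∩ Dw) := by rw [h_perm e]
      _ = π ((fun w : (Fin n ⊕ Fin 2) → ℝ => w ∘ e) ⁻¹' ({w | rnk j w = k} ∩ Dw)) :=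
          Measure.map_apply hme (hA_meas j k)
      _ = π ({w | rnk (Sum.inr 0) w = k} ∩ Dw) := by rw [hpre]
  -- rank is uniform
  have hrank_unif : ∀ k ≤ n,
      π ({w | rnk (Sum.inr 0) w = k} ∩ Dw) = (((n+1 : ℕ)) : ENNReal)⁻¹ := by
    intro k hk
    have hdisj : (J : Set (Fin n ⊕ Fin 2)).PairwiseDisjoint
        (fun j => {w | rnk j w = k} ∩ Dw) := by
      intro j hj j' hj' hne
      refine Set.disjoint_left.mpr fun w hw hw' => ?_
      exact hne (hrnk_inj w hw.2 j (by simpa using hj) j' (by simpa using hj')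
        (hw.1.trans hw'.1.symm))
    have hunion : ⋃ j ∈ J, ({w | rnk j w = k} ∩ Dw) = Dw := by
      apply Set.Subset.antisymm
      · exact Set.iUnion₂_subset fun j _ => Set.inter_subset_right
      · intro w hw
        obtain ⟨j, hj, hjk⟩ := hcover k hk w hw
        exact Set.mem_biUnion hj ⟨hjk, hw⟩
    have hsum : ∑ j ∈ J, π ({w | rnk j w = k} ∩ Dw) = 1 := by
      rw [← measure_biUnion_finset hdisj (fun j _ => hA_meas j k), hunion, hDw_one]
    rw [Finset.sum_congr rfl (fun j hj => hswap j hj k), Finset.sum_const, hJcard,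
      nsmul_eq_mul] at hsum
    have hne : ((n : ENNReal) + 1) ≠ 0 := by simp
    have hnt : ((n : ENNReal) + 1) ≠ ⊤ :=
      ENNReal.add_ne_top.mpr ⟨ENNReal.natCast_ne_top n, ENNReal.one_ne_top⟩
    have hcast : (((n+1 : ℕ)) : ENNReal) = (n : ENNReal) + 1 := by push_cast; ring
    rw [hcast] at hsum ⊢
    calc π ({w | rnk (Sum.inr 0) w = k} ∩ Dw)
        = ((n : ENNReal)+1)⁻¹ * (((n : ENNReal)+1) * π ({w | rnk (Sum.inr 0) w = k} ∩ Dw)) := by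
          rw [← mul_assoc, ENNReal.inv_mul_cancel hne hnt, one_mul]
      _ = ((n : ENNReal)+1)⁻¹ := by rw [hsum, mul_one]
  -- back in Ω: the real rank R' and τ
  set R' : Ω → ℕ :=
    fun ω => (Finset.univ.filter fun i : Fin n => V (Sum.inl i) ω < V (Sum.inr 0) ω).card
    with hR'
  set T : Ω → ℝ := V (Sum.inr 1) with hT
  have hfilter_eq : ∀ w : (Fin n ⊕ Fin 2) → ℝ,
      J.filter (fun a => w a < w (Sum.inr 0))
        = (Finset.univ.filter fun i : Fin n => w (Sum.inl i) < w (Sum.inr 0)).image Sum.inl := by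
    intro w
    ext a
    rw [Finset.mem_filter, Finset.mem_image]
    constructor
    · rintro ⟨haJ, hlt⟩
      match a with
      | Sum.inl i => exact ⟨i, Finset.mem_filter.mpr ⟨Finset.mem_univ _, hlt⟩, rfl⟩
      | Sum.inr b =>
        rw [hmemJ] at haJ
        have hb : b = 0 := by
          have h1 : b ≠ 1 := fun h => haJ (by rw [h])
          have h2 := b.isLt
          apply Fin.ext
          have h3 : b.val ≠ 1 := fun h => h1 (Fin.ext h)
          simp only [Fin.val_zero]
          omega
        subst hb
        exact absurd hlt (lt_irrefl _)
    · rintro ⟨i, hi, rfl⟩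
      exact ⟨hinlJ i, (Finset.mem_filter.mp hi).2⟩
  have hR'W : ∀ ω, R' ω = rnk (Sum.inr 0) (W ω) := by
    intro ω
    rw [hrnk]
    show R' ω = (J.filter fun a => W ω a < W ω (Sum.inr 0)).card
    rw [hfilter_eq (W ω), Finset.card_image_of_injective _ Sum.inl_injective]
  have hR'_meas : Measurable R' := by
    have hh : R' = fun ω => ∑ i : Fin n, if V (Sum.inl i) ω < V (Sum.inr 0) ω then 1 else 0 := by
      funext ω; rw [hR']; exact Finset.card_filter _ _
    rw [hh]
    exact Finset.measurable_sum _ fun i _ => Measurable.ite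
      (measurableSet_lt (hV_meas _) (hV_meas _)) measurable_const measurable_const
  have hT_meas : Measurable T := hV_meas _
  -- independence of R' and T
  have hRT : IndepFun R' T μ := by
    have hdisjJT : Disjoint J ({Sum.inr 1} : Finset (Fin n ⊕ Fin 2)) := by
      rw [Finset.disjoint_singleton_right, hmemJ]
      simp
    have hbase := hV_indep.indepFun_finset J {Sum.inr 1} hdisjJT hV_meas
    have hcomp := hbase.comp
      (φ := fun x : {a // a ∈ J} → ℝ =>
        ∑ i : Fin n, if x ⟨Sum.inl i, hinlJ i⟩ < x ⟨Sum.inr 0, hr0J⟩ then 1 else 0)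
      (ψ := fun y : {a // a ∈ ({Sum.inr 1} : Finset (Fin n ⊕ Fin 2))} → ℝ =>
        y ⟨Sum.inr 1, Finset.mem_singleton_self _⟩)
      (Finset.measurable_sum _ fun i _ => Measurable.ite
        (measurableSet_lt (measurable_pi_apply _) (measurable_pi_apply _))
        measurable_const measurable_const)
      (measurable_pi_apply _ : Measurable fun y : {a // a ∈ ({Sum.inr 1} : Finset (Fin n ⊕ Fin 2))} → ℝ =>
        y ⟨Sum.inr 1, Finset.mem_singleton_self _⟩)
    have heq1 : (fun x : {a // a ∈ J} → ℝ =>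
        ∑ i : Fin n, if x ⟨Sum.inl i, hinlJ i⟩ < x ⟨Sum.inr 0, hr0J⟩ then 1 else 0) ∘
        (fun ω (i : {a // a ∈ J}) => V i ω) = R' := by
      funext ω
      rw [hR']
      exact (Finset.card_filter _ _).symm
    have heq2 : (fun y : {a // a ∈ ({Sum.inr 1} : Finset (Fin n ⊕ Fin 2))} → ℝ =>
        y ⟨Sum.inr 1, Finset.mem_singleton_self _⟩) ∘
        (fun ω (i : {a // a ∈ ({Sum.inr 1} : Finset (Fin n ⊕ Fin 2))}) => V i ω) = T := rfl
    rwa [heq1, heq2] at hcomp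
  -- distribution of T
  have hTc : ∀ c : ℝ, μ (T ⁻¹' Iic c) = ENNReal.ofReal (min c 1) := by
    intro c
    rw [hT, ← Measure.map_apply (hV_meas (Sum.inr 1)) measurableSet_Iic, hV_unif, hν,
      Measure.restrict_apply measurableSet_Iic]
    have hseteq : Iic c ∩ Icc (0:ℝ) 1 = Icc 0 (min c 1) := by
      ext x
      simp only [Set.mem_inter_iff, Set.mem_Iic, Set.mem_Icc, le_min_iff]
      constructor
      · rintro ⟨h1, h2, h3⟩; exact ⟨h2, h1, h3⟩
      · rintro ⟨h1, h2, h3⟩; exact ⟨h2, h1, h3⟩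
    rw [hseteq, Real.volume_Icc, sub_zero]
  -- distribution of R'
  have hRk : ∀ k, k ≤ n → μ (R' ⁻¹' {k}) = ((n : ENNReal) + 1)⁻¹ := by
    intro k hk
    have hmeasset : MeasurableSet {w : (Fin n ⊕ Fin 2) → ℝ | rnk (Sum.inr 0) w = k} :=
      (hrnk_meas _) (measurableSet_singleton k)
    have h1 : μ (R' ⁻¹' {k}) = π {w | rnk (Sum.inr 0) w = k} := by
      rw [← h_map, Measure.map_apply hW hmeasset]
      congr 1
      ext ω
      simp only [Set.mem_preimage, Set.mem_singleton_iff, Set.mem_setOf_eq, hR'W ω]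
      exact Iff.rfl
    rw [h1, ← measure_inter_add_diff _ hDw_meas]
    have h2 : π ({w | rnk (Sum.inr 0) w = k} \ Dw) = 0 :=
      measure_mono_null (fun w hw => hw.2) hDwc_null
    rw [h2, add_zero, hrank_unif k hk]
    push_cast
    ring
  -- the good (no-tie) event
  set G : Set Ω := {ω | ∀ i : Fin n, V (Sum.inl i) ω ≠ V (Sum.inr 0) ω} with hG
  have hG_meas : MeasurableSet G := by
    have : G = ⋂ i : Fin n, {ω | V (Sum.inl i) ω = V (Sum.inr 0) ω}ᶜ := by
      ext ω; simp [hG]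
    rw [this]
    exact MeasurableSet.iInter fun i =>
      (measurableSet_eq_fun (hV_meas _) (hV_meas _)).compl
  have hGc_null : μ Gᶜ = 0 := by
    have hsub : Gᶜ ⊆ ⋃ i : Fin n, {ω | V (Sum.inl i) ω = V (Sum.inr 0) ω} := by
      intro ω hω
      simp only [hG, Set.mem_compl_iff, Set.mem_setOf_eq, not_forall, not_not] at hω
      obtain ⟨i, hi⟩ := hω
      exact Set.mem_iUnion.mpr ⟨i, hi⟩
    exact measure_mono_null hsub (measure_iUnion_null fun i =>
      h_tie (Sum.inl i) (Sum.inr 0) (by simp))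
  have hmeq : ∀ s : Set Ω, μ s = μ (s ∩ G) := by
    intro s
    rw [← measure_inter_add_diff s hG_meas]
    have h0 : μ (s \ G) = 0 := measure_mono_null (fun ω hω => hω.2) hGc_null
    rw [h0, add_zero]
  -- final computation
  intro α hα
  obtain ⟨hα0, hα1⟩ := hα
  set β : ℝ := α * (n + 1) with hβ
  have hnpos : (0:ℝ) < (n:ℝ) + 1 := by positivity
  have hβ0 : 0 ≤ β := by rw [hβ]; positivity
  have hβ1 : β ≤ (n:ℝ) + 1 := by
    rw [hβ]
    nlinarith
  -- on G, Q ≤ α iff R' + T ≤ β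
  have hGiff : ∀ ω ∈ G, (Q ω ≤ α ↔ (R' ω : ℝ) + T ω ≤ β) := by
    intro ω hω
    have hc0 : (Finset.univ.filter fun i : Fin n =>
        V (Sum.inl i) ω = V (Sum.inr 0) ω) = ∅ := by
      rw [Finset.filter_eq_empty_iff]
      intro i _
      exact hω i
    have hQω : Q ω = ((R' ω : ℝ) + T ω) / ((n:ℝ) + 1) := by
      rw [hQ ω, hc0, hR']
      simp only [Finset.card_empty, Nat.cast_zero, mul_zero, zero_div]
      rw [hT]
      ring
    rw [hQω, div_le_iff₀ hnpos, hβ]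
  have hset : {ω | Q ω ≤ α} ∩ G = {ω | (R' ω : ℝ) + T ω ≤ β} ∩ G := by
    ext ω
    simp only [Set.mem_inter_iff, Set.mem_setOf_eq]
    constructor
    · rintro ⟨h1, h2⟩; exact ⟨(hGiff ω h2).mp h1, h2⟩
    · rintro ⟨h1, h2⟩; exact ⟨(hGiff ω h2).mpr h1, h2⟩
  rw [hmeq {ω | Q ω ≤ α}, hset, ← hmeq _]
  -- decompose over the value of R'
  have hR'le : ∀ ω, R' ω ≤ n := by
    intro ω
    rw [hR']
    exact le_trans (Finset.card_filter_le _ _) (by simp)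
  have hdecomp : {ω | (R' ω : ℝ) + T ω ≤ β}
      = ⋃ k ∈ Finset.range (n+1), (R' ⁻¹' {k} ∩ T ⁻¹' (Iic (β - k))) := by
    ext ω
    simp only [Set.mem_setOf_eq, Set.mem_iUnion, Set.mem_inter_iff, Set.mem_preimage,
      Set.mem_singleton_iff, Set.mem_Iic, Finset.mem_range]
    constructor
    · intro h
      exact ⟨R' ω, Nat.lt_succ_of_le (hR'le ω), rfl, by linarith⟩
    · rintro ⟨k, _, hrk, hTk⟩
      rw [hrk]; push_cast at hTk ⊢; linarith
  rw [hdecomp]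
  have hdisjk : Set.PairwiseDisjoint ↑(Finset.range (n+1))
      (fun k : ℕ => R' ⁻¹' {k} ∩ T ⁻¹' (Iic (β - k))) := by
    intro k _ k' _ hne
    refine Set.disjoint_left.mpr fun ω hω hω' => ?_
    exact hne (hω.1.symm.trans hω'.1)
  rw [measure_biUnion_finset hdisjk (fun k _ =>
    (hR'_meas (measurableSet_singleton k)).inter (hT_meas measurableSet_Iic))]
  have hterm : ∀ k ∈ Finset.range (n+1),
      μ (R' ⁻¹' {k} ∩ T ⁻¹' (Iic (β - k)))
        = ENNReal.ofReal (((n:ℝ)+1)⁻¹ * max 0 (min (β - k) 1)) := by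
    intro k hk
    rw [hRT.measure_inter_preimage_eq_mul _ _ (measurableSet_singleton k) measurableSet_Iic,
      hRk k (Nat.lt_succ_iff.mp (Finset.mem_range.mp hk)), hTc]
    have hinv : ((n : ENNReal) + 1)⁻¹ = ENNReal.ofReal (((n:ℝ)+1)⁻¹) := by
      rw [ENNReal.ofReal_inv_of_pos hnpos]
      congr 1
      rw [← ENNReal.ofReal_natCast n, ← ENNReal.ofReal_one, ← ENNReal.ofReal_add
        (Nat.cast_nonneg n) zero_le_one]
    have hmax : ENNReal.ofReal (min (β - k) 1) = ENNReal.ofReal (max 0 (min (β - k) 1)) := by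
      rcases le_total (min (β - k) 1) 0 with h | h
      · rw [max_eq_left h, ENNReal.ofReal_of_nonpos h, ENNReal.ofReal_zero]
      · rw [max_eq_right h]
    rw [hinv, hmax, ← ENNReal.ofReal_mul (by positivity)]
  rw [Finset.sum_congr rfl hterm, ← ENNReal.ofReal_sum_of_nonneg
    (fun k _ => by positivity)]
  congr 1
  rw [← Finset.mul_sum, clamp_sum n β hβ0 hβ1, hβ]
  field_simp
end

section
/- Let α_{m+1},…,α_n, α be exchangeable random variables (e.g., IID) and τ be uniform on [0,1], independent of them. Define p = (1/(n−m+1))|{i : α_i < α}| + (τ/(n−m+1))·(|{i : α_i = α}| + 1). Then P(p ≤ β) = β for every β ∈ [0,1]. -/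
open MeasureTheory ProbabilityTheory Set Finset

open scoped ENNReal

namespace SCPV
variable {k : ℕ}

noncomputable def Ln (x : Fin k → ℝ) (v : ℝ) : ℕ := (univ.filter fun i => x i < v).card
noncomputable def Gn (x : Fin k → ℝ) (v : ℝ) : ℕ := (univ.filter fun i => x i = v).card

lemma Gn_pos (x : Fin k → ℝ) {v : ℝ} (hv : v ∈ Set.range x) : 0 < Gn x v := by
  obtain ⟨i, rfl⟩ := hv
  exact Finset.card_pos.mpr ⟨i, by simp [Gn]⟩

-- cast as sums of indicators
lemma Ln_cast (x : Fin k → ℝ) (v : ℝ) :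
    ((Ln x v : ℝ)) = ∑ i, if x i < v then (1:ℝ) else 0 := by
  rw [Ln, Finset.card_filter]
  push_cast
  exact Finset.sum_congr rfl fun i _ => by split <;> simp

lemma Gn_cast (x : Fin k → ℝ) (v : ℝ) :
    ((Gn x v : ℝ)) = ∑ i, if x i = v then (1:ℝ) else 0 := by
  rw [Gn, Finset.card_filter]
  push_cast
  exact Finset.sum_congr rfl fun i _ => by split <;> simp

lemma measurable_Lnr (j : Fin k) : Measurable (fun x : Fin k → ℝ => (Ln x (x j) : ℝ)) := by
  have : (fun x : Fin k → ℝ => (Ln x (x j) : ℝ))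
      = fun x => ∑ i, if x i < x j then (1:ℝ) else 0 := funext fun x => Ln_cast x (x j)
  rw [this]
  exact Finset.measurable_sum _ fun i _ =>
    Measurable.ite (measurableSet_lt (measurable_pi_apply i) (measurable_pi_apply j))
      measurable_const measurable_const

lemma measurable_Gnr (j : Fin k) : Measurable (fun x : Fin k → ℝ => (Gn x (x j) : ℝ)) := by
  have : (fun x : Fin k → ℝ => (Gn x (x j) : ℝ))
      = fun x => ∑ i, if x i = x j then (1:ℝ) else 0 := funext fun x => Gn_cast x (x j)
  rw [this]
  exact Finset.measurable_sum _ fun i _ =>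
    Measurable.ite (measurableSet_eq_fun (measurable_pi_apply i) (measurable_pi_apply j))
      measurable_const measurable_const

-- permutation invariance
lemma Ln_comp (x : Fin k → ℝ) (σ : Equiv.Perm (Fin k)) (v : ℝ) :
    Ln (fun i => x (σ i)) v = Ln x v := by
  have h := Ln_cast (fun i => x (σ i)) v
  have h' := Ln_cast x v
  have : ∑ i, (if x (σ i) < v then (1:ℝ) else 0) = ∑ i, if x i < v then (1:ℝ) else 0 :=
    Equiv.sum_comp σ (fun i => if x i < v then (1:ℝ) else 0)
  exact_mod_cast h.trans (this.trans h'.symm)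

lemma Gn_comp (x : Fin k → ℝ) (σ : Equiv.Perm (Fin k)) (v : ℝ) :
    Gn (fun i => x (σ i)) v = Gn x v := by
  have h := Gn_cast (fun i => x (σ i)) v
  have h' := Gn_cast x v
  have : ∑ i, (if x (σ i) = v then (1:ℝ) else 0) = ∑ i, if x i = v then (1:ℝ) else 0 :=
    Equiv.sum_comp σ (fun i => if x i = v then (1:ℝ) else 0)
  exact_mod_cast h.trans (this.trans h'.symm)


noncomputable def Un (x : Fin k → ℝ) (v : ℝ) : ℕ := (univ.filter fun i => x i ≤ v).card

lemma Un_eq (x : Fin k → ℝ) (v : ℝ) : Un x v = Ln x v + Gn x v := by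
  rw [Ln, Gn, ← Finset.card_union_of_disjoint]
  · rw [Un]; congr 1
    ext i
    simp only [Finset.mem_filter, Finset.mem_union, Finset.mem_univ, true_and]
    exact le_iff_lt_or_eq
  · rw [Finset.disjoint_left]
    intro i h h'
    simp only [Finset.mem_filter] at h h'
    exact absurd h'.2 (ne_of_lt h.2)

lemma Un_le (x : Fin k → ℝ) (v : ℝ) : Un x v ≤ k := by
  simpa [Un] using (Finset.card_filter_le univ fun i => x i ≤ v)

-- disjointness of intervals for distinct values
lemma Un_le_Ln (x : Fin k → ℝ) {v w : ℝ} (hvw : v < w) : Un x v ≤ Ln x w := by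
  apply Finset.card_le_card
  intro i hi
  simp only [Ln, Un, Finset.mem_filter, Finset.mem_univ, true_and] at *
  exact lt_of_le_of_lt hi hvw


lemma cover (x : Fin k → ℝ) :
    (Finset.univ.image x).biUnion (fun v => Finset.Ico (Ln x v) (Un x v)) = Finset.range k := by
  ext u
  simp only [Finset.mem_biUnion, Finset.mem_range, Finset.mem_Ico, Finset.mem_image,
    Finset.mem_univ, true_and]
  constructor
  · rintro ⟨v, _, _, h2⟩
    exact lt_of_lt_of_le h2 (Un_le x v)
  · intro hu
    have hk : 0 < k := lt_of_le_of_lt (Nat.zero_le u) hu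
    have hne : (univ : Finset (Fin k)).Nonempty := Finset.univ_nonempty_iff.mpr ⟨⟨0, hk⟩⟩
    have himg : (Finset.univ.image x).Nonempty := hne.image x
    set vM := (Finset.univ.image x).max' himg with hvM
    have hUM : Un x vM = k := by
      rw [Un]
      rw [Finset.filter_true_of_mem, Finset.card_univ, Fintype.card_fin]
      intro i _
      exact Finset.le_max' _ _ (Finset.mem_image_of_mem x (Finset.mem_univ i))
    set W := (Finset.univ.image x).filter (fun v => u < Un x v) with hW
    have hWne : W.Nonempty := ⟨vM, Finset.mem_filter.mpr ⟨(Finset.univ.image x).max'_mem himg, by rw [hUM]; exact hu⟩⟩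
    set v0 := W.min' hWne with hv0
    have hv0W : v0 ∈ W := W.min'_mem hWne
    have hv0img : v0 ∈ Finset.univ.image x := (Finset.mem_filter.mp hv0W).1
    have hv0u : u < Un x v0 := (Finset.mem_filter.mp hv0W).2
    obtain ⟨j0, _, hj0⟩ := Finset.mem_image.mp hv0img
    refine ⟨v0, ⟨j0, hj0⟩, ?_, hv0u⟩
    by_contra hcon
    push_neg at hcon
    have hLpos : 0 < Ln x v0 := lt_of_le_of_lt (Nat.zero_le u) hcon
    obtain ⟨i, hi⟩ := Finset.card_pos.mp hLpos
    simp only [Ln, Finset.mem_filter, Finset.mem_univ, true_and] at hi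
    set W2 := (Finset.univ.image x).filter (fun w => w < v0) with hW2
    have hW2ne : W2.Nonempty := ⟨x i, Finset.mem_filter.mpr ⟨Finset.mem_image_of_mem x (Finset.mem_univ i), hi⟩⟩
    set v1 := W2.max' hW2ne with hv1
    have hv1W2 : v1 ∈ W2 := W2.max'_mem hW2ne
    have hv1img : v1 ∈ Finset.univ.image x := (Finset.mem_filter.mp hv1W2).1
    have hv1lt : v1 < v0 := (Finset.mem_filter.mp hv1W2).2
    have hUL : Un x v1 = Ln x v0 := by
      rw [Un, Ln]; congr 1
      ext i'
      simp only [Finset.mem_filter, Finset.mem_univ, true_and]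
      constructor
      · intro h; exact lt_of_le_of_lt h hv1lt
      · intro h
        exact Finset.le_max' W2 (x i') (Finset.mem_filter.mpr
          ⟨Finset.mem_image_of_mem x (Finset.mem_univ i'), h⟩)
    have hv1W : v1 ∈ W := Finset.mem_filter.mpr ⟨hv1img, by rw [hUL]; exact hcon⟩
    exact absurd (W.min'_le v1 hv1W) (not_le.mpr hv1lt)


lemma pairwise_disj (x : Fin k → ℝ) :
    Set.PairwiseDisjoint ↑(Finset.univ.image x) (fun v => Finset.Ico (Ln x v) (Un x v)) := by
  intro v _ w _ hvw
  simp only [Function.onFun]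
  have key : ∀ a b : ℝ, a < b → Disjoint (Finset.Ico (Ln x a) (Un x a)) (Finset.Ico (Ln x b) (Un x b)) := by
    intro a b hab
    have hUL := Un_le_Ln x hab
    rw [Finset.disjoint_left]
    intro u hu hu'
    rw [Finset.mem_Ico] at hu hu'
    exact absurd hu'.1 (not_le.mpr (lt_of_lt_of_le hu.2 hUL))
  rcases lt_or_gt_of_ne hvw with h | h
  · exact key v w h
  · exact (key w v h).symm

lemma min_tele (s : ℝ) (N : ℕ) :
    ∑ u ∈ Finset.range N, (min s ((u : ℝ) + 1) - min s (u : ℝ)) = min s (N : ℝ) - min s 0 := by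
  have := Finset.sum_range_sub (fun u : ℕ => min s (u : ℝ)) N
  simp only [Nat.cast_add, Nat.cast_one, Nat.cast_zero] at this
  convert this using 2

lemma sum_V (x : Fin k → ℝ) (s : ℝ) (hs0 : 0 ≤ s) (hsk : s ≤ k) :
    ∑ v ∈ Finset.univ.image x, (min s (Un x v : ℝ) - min s (Ln x v : ℝ)) = s := by
  have key : ∀ v, (min s (Un x v : ℝ) - min s (Ln x v : ℝ)) =
      ∑ u ∈ Finset.Ico (Ln x v) (Un x v), (min s ((u : ℝ) + 1) - min s (u : ℝ)) := by
    intro v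
    have hLU : Ln x v ≤ Un x v := by rw [Un_eq]; exact Nat.le_add_right _ _
    rw [Finset.sum_Ico_eq_sub _ hLU, min_tele, min_tele]
    ring
  rw [Finset.sum_congr rfl (fun v _ => key v), ← Finset.sum_biUnion (pairwise_disj x), cover x,
    min_tele, min_eq_left hsk, min_eq_right hs0, sub_zero]

lemma clamp_eq (L G : ℕ) (hG : 0 < G) (s : ℝ) :
    max 0 (min ((s - (L : ℝ)) / (G : ℝ)) 1) = (min s ((L : ℝ) + G) - min s (L : ℝ)) / G := by
  have hGr : (0 : ℝ) < G := by exact_mod_cast hG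
  rcases le_total s (L : ℝ) with h | h
  · have hL : s ≤ (L : ℝ) + G := by linarith
    rw [min_eq_left h, min_eq_left hL, sub_self, zero_div]
    have hc : (s - (L : ℝ)) / G ≤ 0 := div_nonpos_of_nonpos_of_nonneg (by linarith) hGr.le
    rw [max_eq_left (le_trans (min_le_left _ _) hc)]
  · rcases le_total s ((L : ℝ) + G) with h2 | h2
    · rw [min_eq_left h2, min_eq_right h]
      have hc1 : (s - (L : ℝ)) / G ≤ 1 := (div_le_one hGr).mpr (by linarith)
      have hc0 : 0 ≤ (s - (L : ℝ)) / G := div_nonneg (by linarith) hGr.le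
      rw [min_eq_left hc1, max_eq_right hc0]
    · rw [min_eq_right h2, min_eq_right h]
      have hc1 : (1 : ℝ) ≤ (s - (L : ℝ)) / G := (le_div_iff₀ hGr).mpr (by linarith)
      rw [min_eq_right hc1, max_eq_right zero_le_one]
      field_simp
      ring

lemma sum_clamp (x : Fin k → ℝ) (s : ℝ) (hs0 : 0 ≤ s) (hsk : s ≤ k) :
    ∑ j : Fin k, max 0 (min ((s - (Ln x (x j) : ℝ)) / (Gn x (x j) : ℝ)) 1) = s := by
  classical
  rw [← Finset.sum_fiberwise_of_maps_to'
    (t := Finset.univ.image x)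
    (fun i _ => Finset.mem_image_of_mem x (Finset.mem_univ i))
    (fun v => max 0 (min ((s - (Ln x v : ℝ)) / (Gn x v : ℝ)) 1))]
  have hterm : ∀ v ∈ Finset.univ.image x,
      (∑ _j ∈ univ.filter (fun j => x j = v), max 0 (min ((s - (Ln x v : ℝ)) / (Gn x v : ℝ)) 1))
        = min s (Un x v : ℝ) - min s (Ln x v : ℝ) := by
    intro v hv
    have hvr : v ∈ Set.range x := by
      obtain ⟨i, _, rfl⟩ := Finset.mem_image.mp hv; exact ⟨i, rfl⟩
    have hG := Gn_pos x hvr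
    have hGr : (0 : ℝ) < Gn x v := by exact_mod_cast hG
    rw [Finset.sum_const]
    have hcard : (univ.filter fun j => x j = v).card = Gn x v := rfl
    rw [hcard, clamp_eq _ _ hG s, nsmul_eq_mul, mul_div_cancel₀ _ (ne_of_gt hGr)]
    rw [Un_eq]; push_cast; ring_nf
  rw [Finset.sum_congr rfl hterm]
  exact sum_V x s hs0 hsk


lemma Ln_snoc {N : ℕ} (y : Fin N → ℝ) (a : ℝ) :
    Ln (Fin.snoc y a) ((Fin.snoc y a : Fin (N+1) → ℝ) (Fin.last N))
      = (univ.filter fun j => y j < a).card := by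
  rw [Ln, Finset.card_filter, Finset.card_filter, Fin.sum_univ_castSucc]
  simp [Fin.snoc_castSucc, Fin.snoc_last]

lemma Gn_snoc {N : ℕ} (y : Fin N → ℝ) (a : ℝ) :
    Gn (Fin.snoc y a) ((Fin.snoc y a : Fin (N+1) → ℝ) (Fin.last N))
      = (univ.filter fun j => y j = a).card + 1 := by
  rw [Gn, Finset.card_filter, Finset.card_filter, Fin.sum_univ_castSucc]
  simp [Fin.snoc_castSucc, Fin.snoc_last]

end SCPV

/-- calibration in probability of the smoothed split-conformal p-value.
The calibration scores `α_{m+1},…,α_n` together with the test score `α` form an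
exchangeable family of `n−m+1` random variables, and `τ` is uniform on `[0,1]`
independent of them; then `p = (|{i : α_i < α}| + τ(|{i : α_i = α}| + 1))/(n−m+1)`
satisfies `P(p ≤ β) = β` for every `β ∈ [0,1]`. -/
theorem split_conformal_p_value_uniform
    {Ω : Type*} [MeasurableSpace Ω] (μ : Measure Ω) [IsProbabilityMeasure μ]
    (m n : ℕ) (hmn : m < n)
    (α : Fin (n - m) → Ω → ℝ)   -- calibration scores α_{m+1},…,α_n
    (αtest : Ω → ℝ)             -- the test score α
    (τ : Ω → ℝ)
    (hα_meas : ∀ i, Measurable (α i)) (hαtest_meas : Measurable αtest)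
    (hτ_meas : Measurable τ)
    -- exchangeability of the combined family of the n−m+1 scores:
    (h_exch : ∀ σ : Equiv.Perm (Fin (n - m + 1)),
      Measure.map (fun ω => fun i => (Fin.snoc (fun j => α j ω) (αtest ω) : Fin (n - m + 1) → ℝ) (σ i)) μ =
        Measure.map (fun ω => fun i => (Fin.snoc (fun j => α j ω) (αtest ω) : Fin (n - m + 1) → ℝ) i) μ)
    -- τ is uniform on [0,1] and independent of the scores:
    (hτ_unif : Measure.map τ μ = volume.restrict (Icc (0 : ℝ) 1))
    (hτ_indep : IndepFun (fun ω => (Fin.snoc (fun j => α j ω) (αtest ω) : Fin (n - m + 1) → ℝ)) τ μ)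
    (p : Ω → ℝ)
    (hp : ∀ ω, p ω = (1 / (n - m + 1 : ℝ)) *
      (((univ.filter fun i => α i ω < αtest ω).card : ℝ)
        + τ ω * (((univ.filter fun i => α i ω = αtest ω).card : ℝ) + 1))) :
    ∀ β ∈ Icc (0 : ℝ) 1, μ {ω | p ω ≤ β} = ENNReal.ofReal β := by
  classical
  intro β hβ
  obtain ⟨hβ0, hβ1⟩ := hβ
  set X : Ω → (Fin (n - m + 1) → ℝ) := fun ω => Fin.snoc (fun j => α j ω) (αtest ω) with hXdef
  have hX : Measurable X := by
    apply measurable_pi_lambda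
    intro i
    refine Fin.lastCases ?_ ?_ i
    · simpa [hXdef, Fin.snoc_last] using hαtest_meas
    · intro j; simpa [hXdef, Fin.snoc_castSucc] using hα_meas j
  have hkpos : (0:ℝ) < ((n - m : ℕ):ℝ) + 1 := by positivity
  set s : ℝ := (((n - m : ℕ):ℝ)+1) * β with hs
  have hs0 : 0 ≤ s := mul_nonneg hkpos.le hβ0
  have hsk : s ≤ ((n - m + 1 : ℕ) : ℝ) := by push_cast; nlinarith
  set L : (Fin (n - m + 1) → ℝ) → ℝ := fun x => (SCPV.Ln x (x (Fin.last (n - m))) : ℝ) with hL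
  set G : (Fin (n - m + 1) → ℝ) → ℝ := fun x => (SCPV.Gn x (x (Fin.last (n - m))) : ℝ) with hG
  set S : Set ((Fin (n - m + 1) → ℝ) × ℝ) := {q | L q.1 + q.2 * G q.1 ≤ s} with hSdef
  have hLmeas : Measurable L := SCPV.measurable_Lnr (Fin.last (n - m))
  have hGmeas : Measurable G := SCPV.measurable_Gnr (Fin.last (n - m))
  have hSmeas : MeasurableSet S :=
    measurableSet_le ((hLmeas.comp measurable_fst).add
      (measurable_snd.mul (hGmeas.comp measurable_fst))) measurable_const
  have hnm : ((n:ℝ) - m + 1) = ((n - m : ℕ):ℝ) + 1 := by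
    rw [Nat.cast_sub hmn.le]
  have hset : {ω | p ω ≤ β} = (fun ω => (X ω, τ ω)) ⁻¹' S := by
    ext ω
    simp only [Set.mem_setOf_eq, Set.mem_preimage, hSdef]
    have hA : L (X ω) = ((univ.filter fun i => α i ω < αtest ω).card : ℝ) := by
      rw [hL]
      simp only [hXdef]
      rw [SCPV.Ln_snoc]
    have hB : G (X ω) = ((univ.filter fun i => α i ω = αtest ω).card : ℝ) + 1 := by
      rw [hG]
      simp only [hXdef]
      rw [SCPV.Gn_snoc]
      push_cast
      ring
    have hpω : p ω = ((((n - m : ℕ):ℝ)+1))⁻¹ * (L (X ω) + τ ω * G (X ω)) := by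
      rw [hp ω, hA, hB, hnm, one_div]
    rw [hpω, inv_mul_le_iff₀ hkpos]
  set ν := μ.map X with hν
  have hνprob : IsProbabilityMeasure ν := Measure.isProbabilityMeasure_map hX.aemeasurable
  set κ := (volume.restrict (Icc (0:ℝ) 1)) with hκ
  have hκprob : IsProbabilityMeasure κ := ⟨by
    rw [hκ, Measure.restrict_apply MeasurableSet.univ, Set.univ_inter, Real.volume_Icc]
    norm_num⟩
  have hpair : μ.map (fun ω => (X ω, τ ω)) = ν.prod κ := by
    rw [hν, ← hτ_unif]
    exact (indepFun_iff_map_prod_eq_prod_map_map hX.aemeasurable hτ_meas.aemeasurable).mp hτ_indep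
  have hμS : μ {ω | p ω ≤ β} = (ν.prod κ) S := by
    rw [hset, ← hpair, Measure.map_apply (hX.prodMk hτ_meas) hSmeas]
  set F : Fin (n - m + 1) → (Fin (n - m + 1) → ℝ) → ℝ≥0∞ :=
    fun j x => ENNReal.ofReal (min ((s - (SCPV.Ln x (x j):ℝ)) / (SCPV.Gn x (x j):ℝ)) 1) with hF
  have hFmeas : ∀ j, Measurable (F j) := fun j =>
    ENNReal.measurable_ofReal.comp
      (((measurable_const.sub (SCPV.measurable_Lnr j)).div (SCPV.measurable_Gnr j)).min
        measurable_const)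
  have hprodS : (ν.prod κ) S = ∫⁻ x, F (Fin.last (n - m)) x ∂ν := by
    rw [Measure.prod_apply hSmeas]
    refine lintegral_congr fun x => ?_
    have hGpos : (0:ℝ) < G x := by
      have h := SCPV.Gn_pos x ⟨Fin.last (n - m), rfl⟩
      show (0:ℝ) < (SCPV.Gn x (x (Fin.last (n - m))) : ℝ)
      exact_mod_cast h
    have hpre : (Prod.mk x ⁻¹' S) = Set.Iic ((s - L x)/(G x)) := by
      ext t
      simp only [Set.mem_preimage, hSdef, Set.mem_setOf_eq, Set.mem_Iic]
      rw [le_div_iff₀ hGpos]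
      constructor <;> intro h <;> linarith
    rw [hpre, hκ, Measure.restrict_apply measurableSet_Iic]
    have hIcc : Set.Iic ((s - L x)/G x) ∩ Icc 0 1 = Icc 0 (min ((s - L x)/G x) 1) := by
      ext t
      simp only [Set.mem_inter_iff, Set.mem_Iic, Set.mem_Icc, le_min_iff]
      constructor
      · rintro ⟨h1, h2, h3⟩; exact ⟨h2, h1, h3⟩
      · rintro ⟨h1, h2, h3⟩; exact ⟨h2, h1, h3⟩
    rw [hIcc, Real.volume_Icc, hF]
    norm_num
    rfl
  have hperm : ∀ j, ∫⁻ x, F (Fin.last (n - m)) x ∂ν = ∫⁻ x, F j x ∂ν := by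
    intro j
    set σ := Equiv.swap j (Fin.last (n - m)) with hσ
    have hT : Measurable (fun x : Fin (n - m + 1) → ℝ => fun i => x (σ i)) :=
      measurable_pi_lambda _ fun i => measurable_pi_apply (σ i)
    have hmap : ν.map (fun x => fun i => x (σ i)) = ν := by
      rw [hν, Measure.map_map hT hX]
      exact h_exch σ
    conv_lhs => rw [← hmap]
    rw [lintegral_map (hFmeas _) hT]
    refine lintegral_congr fun x => ?_
    have hσlast : σ (Fin.last (n - m)) = j := Equiv.swap_apply_right j (Fin.last (n - m))
    simp only [hF]
    rw [SCPV.Ln_comp x σ, SCPV.Gn_comp x σ, hσlast]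
  have hsum : ∀ x : Fin (n - m + 1) → ℝ, ∑ j, F j x = ENNReal.ofReal s := by
    intro x
    have h1 : ∀ j, F j x =
        ENNReal.ofReal (max 0 (min ((s - (SCPV.Ln x (x j):ℝ))/(SCPV.Gn x (x j):ℝ)) 1)) := by
      intro j
      simp only [hF]
      rcases le_total (min ((s - (SCPV.Ln x (x j):ℝ))/(SCPV.Gn x (x j):ℝ)) 1) 0 with h | h
      · rw [ENNReal.ofReal_of_nonpos h, max_eq_left h, ENNReal.ofReal_zero]
      · rw [max_eq_right h]
    rw [Finset.sum_congr rfl fun j _ => h1 j,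
      ← ENNReal.ofReal_sum_of_nonneg (fun j _ => le_max_left _ _),
      SCPV.sum_clamp x s hs0 hsk]
  have hfinal : ((n - m + 1 : ℕ) : ℝ≥0∞) * ((ν.prod κ) S) = ENNReal.ofReal s := by
    have step1 : ∑ j : Fin (n - m + 1), ∫⁻ x, F j x ∂ν
        = ((n - m + 1 : ℕ) : ℝ≥0∞) * ((ν.prod κ) S) := by
      rw [Finset.sum_congr rfl fun j _ => (hperm j).symm, Finset.sum_const, Finset.card_univ,
        Fintype.card_fin, nsmul_eq_mul, hprodS]
    rw [← step1, ← lintegral_finset_sum _ fun j _ => hFmeas j,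
      lintegral_congr hsum, lintegral_const, measure_univ, mul_one]
  have hofs : ENNReal.ofReal s = ((n - m + 1 : ℕ) : ℝ≥0∞) * ENNReal.ofReal β := by
    rw [hs, ENNReal.ofReal_mul (by positivity)]
    congr 1
    rw [← ENNReal.ofReal_natCast (n - m + 1)]
    congr 1
    push_cast
    ring
  have hknz : ((n - m + 1 : ℕ) : ℝ≥0∞) ≠ 0 := by
    simp
  have hktop : ((n - m + 1 : ℕ) : ℝ≥0∞) ≠ ⊤ := by
    simp
  have h2 : ((n - m + 1 : ℕ) : ℝ≥0∞)⁻¹ * (((n - m + 1 : ℕ) : ℝ≥0∞) * ((ν.prod κ) S))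
      = ((n - m + 1 : ℕ) : ℝ≥0∞)⁻¹ * (((n - m + 1 : ℕ) : ℝ≥0∞) * ENNReal.ofReal β) := by
    rw [hfinal, hofs]
  rw [← mul_assoc, ← mul_assoc, ENNReal.inv_mul_cancel hknz hktop, one_mul, one_mul] at h2
  rw [hμS, h2]
end

section
/- Let A be a predictive system that never takes the values 0 or 1. Then the split-conformalized predictive system C^A satisfies lim_{y→−∞} C^A(z_1,…,z_n,(x,y),0) = 0 and lim_{y→+∞} C^A(z_1,…,z_n,(x,y),1) = 1 for every training sequence and test object; hence C^A is a randomized predictive system. -/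
open Set Finset Filter

/-- if the base predictive system `A` never takes the values 0 or 1, then
the split-conformalized predictive system `C^A` satisfies
`lim_{y→−∞} C^A(…,(x,y),0) = 0` and `lim_{y→+∞} C^A(…,(x,y),1) = 1`
for every training sequence and test object. -/
theorem split_conformalized_limits
    {𝓧 : Type*} (m k : ℕ)
    (A : (Fin m → 𝓧 × ℝ) → 𝓧 × ℝ → ℝ)
    (hA_range : ∀ zs z, A zs z ∈ Ioo (0 : ℝ) 1)  -- never takes the values 0 or 1
    (hA_mono : ∀ zs (x : 𝓧), Monotone fun y => A zs (x, y))
    (hA_bot : ∀ zs (x : 𝓧), Tendsto (fun y => A zs (x, y)) atBot (nhds 0))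
    (hA_top : ∀ zs (x : 𝓧), Tendsto (fun y => A zs (x, y)) atTop (nhds 1))
    (zs : Fin m → 𝓧 × ℝ)      -- training sequence proper z_1,…,z_m
    (zc : Fin k → 𝓧 × ℝ)      -- calibration sequence z_{m+1},…,z_n (k = n − m)
    (x : 𝓧)
    (C : ℝ → ℝ → ℝ)
    (hC : ∀ y τ, C y τ = (1 / (k + 1 : ℝ)) *
      (((univ.filter fun i => A zs (zc i) < A zs (x, y)).card : ℝ)
        + τ * ((univ.filter fun i => A zs (zc i) = A zs (x, y)).card : ℝ) + τ)) :
    Tendsto (fun y => C y 0) atBot (nhds 0) ∧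
      Tendsto (fun y => C y 1) atTop (nhds 1) := by
  constructor
  · have hev : ∀ᶠ y in atBot, ∀ i : Fin k, A zs (x, y) < A zs (zc i) :=
      eventually_all.2 fun i =>
        (hA_bot zs x).eventually_lt_const (hA_range zs (zc i)).1
    refine Tendsto.congr' ?_ tendsto_const_nhds
    filter_upwards [hev] with y hy
    have h1 : (univ.filter fun i => A zs (zc i) < A zs (x, y)) = ∅ := by
      apply Finset.filter_eq_empty_iff.2
      intro i _
      exact not_lt.2 (hy i).le
    have h2 : (univ.filter fun i => A zs (zc i) = A zs (x, y)) = ∅ := by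
      apply Finset.filter_eq_empty_iff.2
      intro i _
      exact fun h => absurd h.symm (ne_of_lt (hy i))
    simp [hC, h1, h2]
  · have hev : ∀ᶠ y in atTop, ∀ i : Fin k, A zs (zc i) < A zs (x, y) :=
      eventually_all.2 fun i =>
        (hA_top zs x).eventually_const_lt (hA_range zs (zc i)).2
    refine Tendsto.congr' ?_ tendsto_const_nhds
    filter_upwards [hev] with y hy
    have h1 : (univ.filter fun i => A zs (zc i) < A zs (x, y)) = (Finset.univ : Finset (Fin k)) := by
      apply Finset.filter_eq_self.2
      intro i _
      exact hy i
    have h2 : (univ.filter fun i => A zs (zc i) = A zs (x, y)) = ∅ := by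
      apply Finset.filter_eq_empty_iff.2
      intro i _
      exact ne_of_lt (hy i)
    have hk : ((k : ℝ) + 1) ≠ 0 := by positivity
    rw [hC]
    simp [h1, h2, Finset.card_univ]
    field_simp
end

section
/- Let p_1,…,p_{n−m} ∈ [0,1] be calibration scores with distinct sorted values p_(1) < … < p_(k) and multiplicities n_1,…,n_k (so n_1 + … + n_k = n − m). Let f : ℝ → [0,1] be monotonically increasing and define m_j = sup{y : f(y) < p_(j)} and M_j = inf{y : f(y) > p_(j)}. Then m_1 ≤ M_1 ≤ m_2 ≤ M_2 ≤ … ≤ m_k ≤ M_k, and for y outside the finite set {m_j, M_j}: the split-conformal value (1/(n−m+1))[|{i : p_i < f(y)}| + τ|{i : p_i = f(y)}| + τ] equals τ/(n−m+1) if y < m_1; (n_1+…+n_{j−1} + τ n_j + τ)/(n−m+1) if y ∈ (m_j, M_j); (n_1+…+n_j + τ)/(n−m+1) if y ∈ (M_j, m_{j+1}); and (n−m+τ)/(n−m+1) if y > M_k. -/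
open Set Finset

lemma count_lemma {N k : ℕ} (p : Fin N → ℝ) (q : Fin k → ℝ)
    (hq : Function.Injective q) (hpq : ∀ i, ∃ j, p i = q j)
    (Q : ℝ → Prop) [DecidablePred Q] :
    ((univ.filter fun i => Q (p i)).card : ℝ)
      = ∑ j, if Q (q j) then (((univ.filter fun i => p i = q j).card : ℝ)) else 0 := by
  rw [Finset.card_filter]
  push_cast
  have key : ∀ i : Fin N, (if Q (p i) then (1:ℝ) else 0)
      = ∑ j, if p i = q j then (if Q (q j) then (1:ℝ) else 0) else 0 := by
    intro i
    obtain ⟨j₀, hj₀⟩ := hpq i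
    rw [Finset.sum_eq_single j₀]
    · simp [hj₀]
    · intro b _ hb
      rw [if_neg]
      intro hc
      exact hb (hq (hj₀.symm.trans hc)).symm
    · simp
  rw [Finset.sum_congr rfl (fun i _ => key i), Finset.sum_comm]
  refine Finset.sum_congr rfl fun j _ => ?_
  by_cases hQ : Q (q j)
  · simp only [hQ, if_true, Finset.card_filter]
    push_cast
    rfl
  · simp [hQ]

/-- correctness of the Split-Conformal Calibrator (Algorithm 1).
`p_1,…,p_N ∈ [0,1]` are the calibration scores, with distinct sorted values
`q_1 < … < q_k` of multiplicities `n_1,…,n_k`; `f : ℝ → [0,1]` is the (monotone) base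
predictive distribution function for the test object;
`m_j = sup {y : f y < q_j}` and `M_j = inf {y : f y > q_j}` (computed in `EReal` so
that `±∞` are allowed). Then `m_1 ≤ M_1 ≤ m_2 ≤ M_2 ≤ … ≤ m_k ≤ M_k`, and outside the
finite set `{m_j, M_j}` the split-conformal value
`(|{i : p_i < f y}| + τ|{i : p_i = f y}| + τ)/(N+1)` is given by the piecewise
formula (2) of the paper. -/
theorem split_conformal_calibrator_correct
    (N k : ℕ) (hk : 0 < k)
    (p : Fin N → ℝ) (hp_range : ∀ i, p i ∈ Icc (0 : ℝ) 1)
    (q : Fin k → ℝ) (hq_mono : StrictMono q)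
    (hpq : ∀ i, ∃ j, p i = q j) (hqp : ∀ j, ∃ i, p i = q j)
    (nmult : Fin k → ℕ)
    (hn : ∀ j, nmult j = (univ.filter fun i => p i = q j).card)
    (f : ℝ → ℝ) (hf_range : ∀ y, f y ∈ Icc (0 : ℝ) 1) (hf_mono : Monotone f)
    (mj Mj : Fin k → EReal)
    (hmj : ∀ j, mj j = sSup ((fun y : ℝ => (y : EReal)) '' {y | f y < q j}))
    (hMj : ∀ j, Mj j = sInf ((fun y : ℝ => (y : EReal)) '' {y | q j < f y}))
    (C : ℝ → ℝ → ℝ)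
    (hC : ∀ y τ, C y τ = (1 / (N + 1 : ℝ)) *
      (((univ.filter fun i => p i < f y).card : ℝ)
        + τ * ((univ.filter fun i => p i = f y).card : ℝ) + τ)) :
    -- interleaving m_1 ≤ M_1 ≤ m_2 ≤ M_2 ≤ … ≤ m_k ≤ M_k:
    (∀ j, mj j ≤ Mj j) ∧
    (∀ (j : Fin k) (h : (j : ℕ) + 1 < k), Mj j ≤ mj ⟨(j : ℕ) + 1, h⟩) ∧
    -- the piecewise formula:
    (∀ (y τ : ℝ),
      ((y : EReal) < mj ⟨0, hk⟩ → C y τ = τ / (N + 1)) ∧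
      (∀ j : Fin k, mj j < (y : EReal) → (y : EReal) < Mj j →
        C y τ = ((∑ l : Fin k, if l < j then (nmult l : ℝ) else 0)
          + τ * (nmult j : ℝ) + τ) / (N + 1)) ∧
      (∀ (j : Fin k) (h : (j : ℕ) + 1 < k),
        Mj j < (y : EReal) → (y : EReal) < mj ⟨(j : ℕ) + 1, h⟩ →
        C y τ = ((∑ l : Fin k, if l ≤ j then (nmult l : ℝ) else 0) + τ) / (N + 1)) ∧
      (Mj ⟨k - 1, Nat.sub_lt hk one_pos⟩ < (y : EReal) →
        C y τ = ((N : ℝ) + τ) / (N + 1))) := by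
  have hqinj := hq_mono.injective
  -- basic facts about mj / Mj
  have below_m : ∀ (j : Fin k) (y : ℝ), (y : EReal) < mj j → f y < q j := by
    intro j y hy
    rw [hmj j, lt_sSup_iff] at hy
    obtain ⟨b, hb, hyb⟩ := hy
    obtain ⟨y', hy', rfl⟩ := hb
    have : y ≤ y' := EReal.coe_le_coe_iff.mp hyb.le
    exact lt_of_le_of_lt (hf_mono this) hy'
  have above_m : ∀ (j : Fin k) (y : ℝ), mj j < (y : EReal) → q j ≤ f y := by
    intro j y hy
    by_contra h
    push_neg at h
    have : (y : EReal) ≤ mj j := by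
      rw [hmj j]; exact le_sSup ⟨y, h, rfl⟩
    exact absurd hy (not_lt.2 this)
  have below_M : ∀ (j : Fin k) (y : ℝ), (y : EReal) < Mj j → f y ≤ q j := by
    intro j y hy
    by_contra h
    push_neg at h
    have : Mj j ≤ (y : EReal) := by
      rw [hMj j]; exact sInf_le ⟨y, h, rfl⟩
    exact absurd hy (not_lt.2 this)
  have above_M : ∀ (j : Fin k) (y : ℝ), Mj j < (y : EReal) → q j < f y := by
    intro j y hy
    rw [hMj j, sInf_lt_iff] at hy
    obtain ⟨b, hb, hby⟩ := hy
    obtain ⟨y', hy', rfl⟩ := hb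
    have : y' ≤ y := EReal.coe_le_coe_iff.mp hby.le
    exact lt_of_lt_of_le hy' (hf_mono this)
  refine ⟨?_, ?_, ?_⟩
  · -- mj j ≤ Mj j
    intro j
    rw [hmj j, hMj j]
    refine sSup_le ?_
    rintro _ ⟨y1, h1, rfl⟩
    refine le_sInf ?_
    rintro _ ⟨y2, h2, rfl⟩
    have : y1 ≤ y2 := by
      by_contra h
      push_neg at h
      exact absurd (hf_mono h.le) (not_le.2 (h1.trans h2))
    exact EReal.coe_le_coe_iff.mpr this
  · -- Mj j ≤ mj (j+1)
    intro j h
    by_contra hcon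
    push_neg at hcon
    obtain ⟨z, hz1, hz2⟩ := EReal.exists_between_coe_real hcon
    have h1 := above_m ⟨(j : ℕ) + 1, h⟩ z hz1
    have h2 := below_M j z hz2
    have : q j < q ⟨(j : ℕ) + 1, h⟩ := hq_mono (by simp [Fin.lt_def])
    linarith
  · intro y τ
    refine ⟨?_, ?_, ?_, ?_⟩
    · -- y < mj 0
      intro hy
      have hfy := below_m ⟨0, hk⟩ y hy
      have h1 : (univ.filter fun i => p i < f y) = ∅ := by
        rw [Finset.filter_eq_empty_iff]
        intro i _
        obtain ⟨j, hj⟩ := hpq i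
        have hle : q ⟨0, hk⟩ ≤ q j := hq_mono.monotone (by simp [Fin.le_def])
        rw [hj]
        exact not_lt.2 (le_of_lt (lt_of_lt_of_le hfy hle))
      have h2 : (univ.filter fun i => p i = f y) = ∅ := by
        rw [Finset.filter_eq_empty_iff]
        intro i _
        obtain ⟨j, hj⟩ := hpq i
        have hle : q ⟨0, hk⟩ ≤ q j := hq_mono.monotone (by simp [Fin.le_def])
        rw [hj]
        exact ne_of_gt (lt_of_lt_of_le hfy hle)
      rw [hC, h1, h2]
      simp
      ring
    · -- mj j < y < Mj j
      intro j hm hM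
      have h1 := above_m j y hm
      have h2 := below_M j y hM
      have hfy : f y = q j := le_antisymm h2 h1
      have hcount : ((univ.filter fun i => p i < f y).card : ℝ)
          = ∑ l, if q l < f y then ((univ.filter fun i => p i = q l).card : ℝ) else 0 :=
        count_lemma p q hqinj hpq (fun x => x < f y)
      have hsum : (∑ l, if q l < f y then ((univ.filter fun i => p i = q l).card : ℝ) else 0)
          = ∑ l : Fin k, if l < j then (nmult l : ℝ) else 0 := by
        refine Finset.sum_congr rfl fun l _ => ?_
        rw [hfy, hn l]
        exact if_congr hq_mono.lt_iff_lt rfl rfl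
      have heq : (univ.filter fun i => p i = f y) = (univ.filter fun i => p i = q j) := by
        simp_rw [hfy]
      rw [hC, hcount, hsum, heq, ← hn j]
      ring
    · -- Mj j < y < mj (j+1)
      intro j h hM hm
      have h1 := above_M j y hM
      have h2 := below_m ⟨(j : ℕ) + 1, h⟩ y hm
      have hne : ∀ l : Fin k, q l ≠ f y := by
        intro l
        rcases le_or_gt l j with hl | hl
        · exact ne_of_lt (lt_of_le_of_lt (hq_mono.monotone hl) h1)
        · have : (⟨(j : ℕ) + 1, h⟩ : Fin k) ≤ l := by
            simp [Fin.le_def]; omega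
          exact ne_of_gt (lt_of_lt_of_le h2 (hq_mono.monotone this))
      have hiff : ∀ l : Fin k, q l < f y ↔ l ≤ j := by
        intro l
        constructor
        · intro hlt
          by_contra hc
          push_neg at hc
          have : (⟨(j : ℕ) + 1, h⟩ : Fin k) ≤ l := by
            simp [Fin.le_def]; omega
          exact absurd hlt (not_lt.2 (le_of_lt (lt_of_lt_of_le h2 (hq_mono.monotone this))))
        · intro hle
          exact lt_of_le_of_lt (hq_mono.monotone hle) h1
      have hcount : ((univ.filter fun i => p i < f y).card : ℝ)
          = ∑ l, if q l < f y then ((univ.filter fun i => p i = q l).card : ℝ) else 0 :=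
        count_lemma p q hqinj hpq (fun x => x < f y)
      have hsum : (∑ l, if q l < f y then ((univ.filter fun i => p i = q l).card : ℝ) else 0)
          = ∑ l : Fin k, if l ≤ j then (nmult l : ℝ) else 0 := by
        refine Finset.sum_congr rfl fun l _ => ?_
        rw [hn l]
        exact if_congr (hiff l) rfl rfl
      have heq : (univ.filter fun i => p i = f y) = ∅ := by
        rw [Finset.filter_eq_empty_iff]
        intro i _
        obtain ⟨l, hl⟩ := hpq i
        rw [hl]
        exact hne l
      rw [hC, hcount, hsum, heq]
      simp
      ring
    · -- Mj (k-1) < y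
      intro hM
      have h1 := above_M ⟨k - 1, Nat.sub_lt hk one_pos⟩ y hM
      have hall : ∀ l : Fin k, q l < f y := by
        intro l
        have : l ≤ (⟨k - 1, Nat.sub_lt hk one_pos⟩ : Fin k) := by
          simp [Fin.le_def]; omega
        exact lt_of_le_of_lt (hq_mono.monotone this) h1
      have hcount : ((univ.filter fun i => p i < f y).card : ℝ)
          = ∑ l, if q l < f y then ((univ.filter fun i => p i = q l).card : ℝ) else 0 :=
        count_lemma p q hqinj hpq (fun x => x < f y)
      have htot : (∑ l : Fin k, ((univ.filter fun i => p i = q l).card : ℝ)) = N := by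
        have := count_lemma p q hqinj hpq (fun _ => True)
        simpa using this.symm
      have hsum : (∑ l, if q l < f y then ((univ.filter fun i => p i = q l).card : ℝ) else 0)
          = (N : ℝ) := by
        rw [← htot]
        exact Finset.sum_congr rfl fun l _ => if_pos (hall l)
      have heq : (univ.filter fun i => p i = f y) = ∅ := by
        rw [Finset.filter_eq_empty_iff]
        intro i _
        obtain ⟨l, hl⟩ := hpq i
        rw [hl]
        exact ne_of_lt (hall l)
      rw [hC, hcount, hsum, heq]
      simp
      ring
end
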